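/- Let (C, μ) be a measure space, let p, q : C → ℝ be probability densities with respect to μ (measurable, nonnegative μ-a.e., integrating to 1), and let f : C → ℝ be a bounded measurable function. Let δ > 0 and suppose ∫_C |q − p| dμ ≤ δ. Then for every pair (α, β) ∈ ℝ² with α ≥ 0 and α + β ≥ −inf_{c ∈ C} f(c), one has ∫_C f·q dμ ≥ −β − δ·α + ∫_C p·min(f + β, α) dμ. -/

import Mathlib

open MeasureTheory

/-- Weak duality direction of Proposition 2 of the paper (DRO under total variation):
for probability densities `p, q` with `∫ |q − p| ≤ δ`, a bounded measurable `f`, and a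
dual-feasible pair `(α, β)` (i.e. `α ≥ 0` and `α + β ≥ −inf_c f(c)`), one has
`∫ f·q ≥ −β − δ·α + ∫ p·min(f + β, α)`. -/
theorem weak_duality_total_variation
    {C : Type*} [MeasurableSpace C] (μ : Measure C)
    (p q : C → ℝ) (hp : Measurable p) (hq : Measurable q)
    (hp0 : 0 ≤ᵐ[μ] p) (hq0 : 0 ≤ᵐ[μ] q)
    (hp1 : (∫ c, p c ∂μ) = 1) (hq1 : (∫ c, q c ∂μ) = 1)
    (f : C → ℝ) (hf : Measurable f) (B : ℝ) (hfB : ∀ c, |f c| ≤ B)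
    (δ : ℝ) (hδ : 0 < δ) (hqp : (∫ c, |q c - p c| ∂μ) ≤ δ)
    (α β : ℝ) (hα : 0 ≤ α) (hαβ : -(⨅ c, f c) ≤ α + β) :
    -β - δ * α + ∫ c, p c * min (f c + β) α ∂μ ≤ ∫ c, f c * q c ∂μ := by
  have hpi : Integrable p μ := by
    by_contra h; rw [integral_undef h] at hp1; norm_num at hp1
  have hqi : Integrable q μ := by
    by_contra h; rw [integral_undef h] at hq1; norm_num at hq1
  set g : C → ℝ := fun c => min (f c + β) α with hgdef
  have hgm : Measurable g := (hf.add measurable_const).min measurable_const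
  have hbdd : BddBelow (Set.range f) := ⟨-B, by
    rintro y ⟨c, rfl⟩; exact neg_le_of_abs_le (hfB c)⟩
  have hinf : ∀ c, (⨅ c', f c') ≤ f c := fun c => ciInf_le hbdd c
  have hgb : ∀ c, |g c| ≤ α := fun c => abs_le.mpr
    ⟨le_min (by linarith [hinf c]) (by linarith), min_le_right _ _⟩
  have hfq : Integrable (fun c => f c * q c) μ :=
    hqi.bdd_mul (c := B) hf.aestronglyMeasurable (ae_of_all _ fun c => by
      rw [Real.norm_eq_abs]; exact hfB c)
  have hgq : Integrable (fun c => g c * q c) μ :=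
    hqi.bdd_mul (c := α) hgm.aestronglyMeasurable (ae_of_all _ fun c => by
      rw [Real.norm_eq_abs]; exact hgb c)
  have hgp : Integrable (fun c => g c * p c) μ :=
    hpi.bdd_mul (c := α) hgm.aestronglyMeasurable (ae_of_all _ fun c => by
      rw [Real.norm_eq_abs]; exact hgb c)
  have hd : Integrable (fun c => q c - p c) μ := hqi.sub hpi
  have hgd : Integrable (fun c => g c * (q c - p c)) μ :=
    hd.bdd_mul (c := α) hgm.aestronglyMeasurable (ae_of_all _ fun c => by
      rw [Real.norm_eq_abs]; exact hgb c)
  -- step 1: ∫ g q ≤ ∫ f q + β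
  have h2 : ∫ c, (f c + β) * q c ∂μ = (∫ c, f c * q c ∂μ) + β := by
    simp_rw [add_mul]
    rw [integral_add hfq (by simpa using hqi.const_mul β)]
    simp [MeasureTheory.integral_const_mul, hq1]
  have h1 : ∫ c, g c * q c ∂μ ≤ ∫ c, (f c + β) * q c ∂μ := by
    refine integral_mono_ae hgq (by
      have : Integrable (fun c => f c * q c + β * q c) μ :=
        hfq.add (hqi.const_mul β)
      simpa [add_mul] using this) ?_
    filter_upwards [hq0] with c hc
    exact mul_le_mul_of_nonneg_right (min_le_left _ _) hc
  -- step 2: ∫ g p ≤ ∫ g q + α * δ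
  have h3 : (∫ c, g c * q c ∂μ) - ∫ c, g c * p c ∂μ
      = ∫ c, g c * (q c - p c) ∂μ := by
    rw [← integral_sub hgq hgp]; simp [mul_sub]
  have h4 : |∫ c, g c * (q c - p c) ∂μ| ≤ α * δ := by
    calc |∫ c, g c * (q c - p c) ∂μ| ≤ ∫ c, |g c * (q c - p c)| ∂μ := by
          simpa only [Real.norm_eq_abs] using norm_integral_le_integral_norm
            (fun c => g c * (q c - p c)) (μ := μ)
      _ ≤ ∫ c, α * |q c - p c| ∂μ := by
          refine integral_mono hgd.abs ((hd.abs).const_mul α) (fun c => ?_)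
          rw [abs_mul]
          exact mul_le_mul_of_nonneg_right (hgb c) (abs_nonneg _)
      _ = α * ∫ c, |q c - p c| ∂μ := MeasureTheory.integral_const_mul α _
      _ ≤ α * δ := mul_le_mul_of_nonneg_left hqp hα
  have h5 : -(α * δ) ≤ (∫ c, g c * q c ∂μ) - ∫ c, g c * p c ∂μ := by
    rw [h3]; linarith [neg_abs_le (∫ c, g c * (q c - p c) ∂μ)]
  have hcomm : (∫ c, p c * g c ∂μ) = ∫ c, g c * p c ∂μ := by
    simp_rw [mul_comm]
  show -β - δ * α + ∫ c, p c * g c ∂μ ≤ ∫ c, f c * q c ∂μ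
  rw [hcomm]
  linarith
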